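/- Let γ̃^i_j satisfy (★) on U and let g_i : U → ℂ be nonvanishing holomorphic functions such that ∂_j g_i = 2 γ̃^i_j g_i for all j ≠ i and ∂_i g_i = −2 (Σ_{k≠i} γ̃^i_k) g_i. Then: (i) the Darboux–Tsarev system holds: for all pairwise distinct i,j,k, −∂_j Γ̂^k_{ii} + Γ̂^k_{ii} Γ̂^i_{ij} − Γ̂^k_{jj} Γ̂^j_{ii} − Γ̂^k_{kj} Γ̂^k_{ii} = 0; and (ii) the unit vector field is Killing: Σ_{k=1}^N ∂_k g_i = 0 for all i. -/

import Mathlib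

noncomputable section

variable {N : ℕ}

/-- The partial derivative `∂_k = ∂/∂u^k` of a function of `N` complex variables. -/
def pder (k : Fin N) (f : (Fin N → ℂ) → ℂ) : (Fin N → ℂ) → ℂ :=
  fun u => fderiv ℂ f u (Pi.single k 1)

/-- Kronecker delta. -/
def kron (i j : Fin N) : ℂ := if i = j then 1 else 0

/-- The system (★) for the functions `γ̃^i_j` (`i ≠ j`) on `U`. -/
def StarSystem (U : Set (Fin N → ℂ)) (γ : Fin N → Fin N → (Fin N → ℂ) → ℂ) : Prop :=
  (∀ i j k : Fin N, i ≠ j → j ≠ k → i ≠ k → ∀ u ∈ U,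
      pder k (γ i j) u =
        -(γ i j u * γ i k u) + γ i j u * γ j k u + γ i k u * γ k j u) ∧
  (∀ i j : Fin N, i ≠ j → ∀ u ∈ U, ∑ k, pder k (γ i j) u = 0)

/-- Christoffel symbols `Γ^i_{jk}` of the flat F-manifold connection in canonical coordinates,
associated to a solution `γ̃` of (★):  `Γ^i_{jk} = 0` for pairwise distinct `i,j,k`;
`Γ^i_{ij} = Γ^i_{ji} = γ̃^i_j` and `Γ^i_{jj} = −γ̃^i_j` for `i ≠ j`;
`Γ^i_{ii} = −Σ_{k≠i} γ̃^i_k`. -/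
def Gam (γ : Fin N → Fin N → (Fin N → ℂ) → ℂ) (i j k : Fin N) : (Fin N → ℂ) → ℂ :=
  if i = j ∧ i = k then fun u => -∑ l ∈ Finset.univ.erase i, γ i l u
  else if i = j then γ i k
  else if i = k then γ i j
  else if j = k then fun u => -(γ i j u)
  else 0

/-- The Levi-Civita Christoffel symbols `Γ̂^i_{jk}` of the diagonal metric `Σ_i g_i (du^i)²`:
`Γ̂^i_{jk} = 0` for pairwise distinct `i,j,k`; `Γ̂^i_{ij} = Γ̂^i_{ji} = (∂_j g_i)/(2 g_i)` for all
`i,j`; `Γ̂^j_{ii} = −(∂_j g_i)/(2 g_j)` for `i ≠ j`. -/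
def GamLC (g : Fin N → (Fin N → ℂ) → ℂ) (i j k : Fin N) : (Fin N → ℂ) → ℂ :=
  if i = j then fun u => pder k (g i) u / (2 * g i u)
  else if i = k then fun u => pder j (g i) u / (2 * g i u)
  else if j = k then fun u => -(pder i (g j) u / (2 * g i u))
  else 0

lemma pder_congr {U : Set (Fin N → ℂ)} (hU : IsOpen U) {u : Fin N → ℂ} (hu : u ∈ U)
    {f h : (Fin N → ℂ) → ℂ} (hfh : ∀ v ∈ U, f v = h v) (j : Fin N) :
    pder j f u = pder j h u := by
  unfold pder
  rw [Filter.EventuallyEq.fderiv_eq ((hU.eventually_mem hu).mono fun v hv => hfh v hv)]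

lemma pder_neg (j : Fin N) (f : (Fin N → ℂ) → ℂ) (u : Fin N → ℂ) :
    pder j (fun v => -(f v)) u = -(pder j f u) := by
  unfold pder; rw [fderiv_fun_neg]; simp

lemma pder_mul {j : Fin N} {f h : (Fin N → ℂ) → ℂ} {u : Fin N → ℂ}
    (hf : DifferentiableAt ℂ f u) (hh : DifferentiableAt ℂ h u) :
    pder j (fun v => f v * h v) u = pder j f u * h u + f u * pder j h u := by
  unfold pder; rw [fderiv_fun_mul hf hh]; simp; ring

lemma pder_inv {j : Fin N} {h : (Fin N → ℂ) → ℂ} {u : Fin N → ℂ}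
    (hh : DifferentiableAt ℂ h u) (hz : h u ≠ 0) :
    pder j (fun v => (h v)⁻¹) u = -(pder j h u) / (h u) ^ 2 := by
  unfold pder
  have : (fun v => (h v)⁻¹) = Inv.inv ∘ h := rfl
  rw [this, ((hasFDerivAt_inv' hz).comp u hh.hasFDerivAt).fderiv]
  simp only [ContinuousLinearMap.coe_comp', Function.comp_apply,
    ContinuousLinearMap.neg_apply, ContinuousLinearMap.mulLeftRight_apply]
  rw [neg_div, neg_inj, sq, div_eq_mul_inv, mul_inv]
  ring

lemma pder_div {j : Fin N} {f h : (Fin N → ℂ) → ℂ} {u : Fin N → ℂ}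
    (hf : DifferentiableAt ℂ f u) (hh : DifferentiableAt ℂ h u) (hz : h u ≠ 0) :
    pder j (fun v => f v / h v) u
      = (pder j f u * h u - f u * pder j h u) / (h u) ^ 2 := by
  simp only [div_eq_mul_inv]
  rw [pder_mul (h := fun v => (h v)⁻¹) hf (hh.inv hz), pder_inv hh hz]
  field_simp
  ring

/-- If `γ̃` solves (★) on `U` and the nonvanishing holomorphic functions `g_i`
satisfy `∂_j g_i = 2 γ̃^i_j g_i` (`j ≠ i`) and `∂_i g_i = −2 (Σ_{k≠i} γ̃^i_k) g_i`, then the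
Darboux–Tsarev system holds and the unit vector field is Killing. -/
theorem statement3 {N : ℕ} (hN : 2 ≤ N) (U : Set (Fin N → ℂ)) (hU : IsOpen U)
    (γ : Fin N → Fin N → (Fin N → ℂ) → ℂ)
    (hhol : ∀ i j : Fin N, i ≠ j → DifferentiableOn ℂ (γ i j) U)
    (hstar : StarSystem U γ)
    (g : Fin N → (Fin N → ℂ) → ℂ)
    (hghol : ∀ i, DifferentiableOn ℂ (g i) U)
    (hgne : ∀ i, ∀ u ∈ U, g i u ≠ 0)
    (hgoff : ∀ i j : Fin N, j ≠ i → ∀ u ∈ U, pder j (g i) u = 2 * γ i j u * g i u)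
    (hgdiag : ∀ i : Fin N, ∀ u ∈ U,
        pder i (g i) u = -2 * (∑ k ∈ Finset.univ.erase i, γ i k u) * g i u) :
    -- (i) the Darboux–Tsarev system
    (∀ i j k : Fin N, i ≠ j → j ≠ k → i ≠ k → ∀ u ∈ U,
        -pder j (GamLC g k i i) u
          + GamLC g k i i u * GamLC g i i j u
          - GamLC g k j j u * GamLC g j i i u
          - GamLC g k k j u * GamLC g k i i u = 0) ∧
    -- (ii) the unit vector field is Killing
    (∀ i : Fin N, ∀ u ∈ U, ∑ k, pder k (g i) u = 0) := by
  obtain ⟨hstar1, _hstar2⟩ := hstar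
  have hdiff : ∀ (f : (Fin N → ℂ) → ℂ), DifferentiableOn ℂ f U → ∀ u ∈ U,
      DifferentiableAt ℂ f u := fun f hf u hu => hf.differentiableAt (hU.mem_nhds hu)
  constructor
  · intro i j k hij hjk hik u hu
    have hki : k ≠ i := Ne.symm hik
    have hkj : k ≠ j := Ne.symm hjk
    have hji : j ≠ i := Ne.symm hij
    have hgiu := hgne i u hu
    have hgju := hgne j u hu
    have hgku := hgne k u hu
    have hdγ : DifferentiableAt ℂ (γ i k) u := hdiff _ (hhol i k hik) u hu
    have hdgi : DifferentiableAt ℂ (g i) u := hdiff _ (hghol i) u hu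
    have hdgk : DifferentiableAt ℂ (g k) u := hdiff _ (hghol k) u hu
    -- rewrite the differentiated Christoffel symbol
    have e1 : GamLC g k i i = fun v => -(pder k (g i) v / (2 * g k v)) := by
      simp [GamLC, hki]
    have e2 : pder j (GamLC g k i i) u
        = pder j (fun v => -(γ i k v * g i v / g k v)) u := by
      rw [e1]
      refine pder_congr hU hu (fun v hv => ?_) j
      rw [hgoff i k hki v hv, mul_assoc, mul_div_mul_left _ _ (two_ne_zero)]
    have e3 : pder j (fun v => -(γ i k v * g i v / g k v)) u
        = -(pder j (fun v => γ i k v * g i v / g k v) u) :=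
      pder_neg j _ u
    have e4 : pder j (fun v => γ i k v * g i v / g k v) u
        = (pder j (fun v => γ i k v * g i v) u * g k u
            - γ i k u * g i u * pder j (g k) u) / (g k u) ^ 2 :=
      pder_div (hdγ.mul hdgi) hdgk hgku
    have e5 : pder j (fun v => γ i k v * g i v) u
        = pder j (γ i k) u * g i u + γ i k u * pder j (g i) u :=
      pder_mul hdγ hdgi
    have hstar_ikj : pder j (γ i k) u
        = -(γ i k u * γ i j u) + γ i k u * γ k j u + γ i j u * γ j k u :=
      hstar1 i k j hik hkj hij u hu
    have hgi_j : pder j (g i) u = 2 * γ i j u * g i u := hgoff i j hji u hu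
    have hgk_j : pder j (g k) u = 2 * γ k j u * g k u := hgoff k j hjk u hu
    have hgi_k : pder k (g i) u = 2 * γ i k u * g i u := hgoff i k hki u hu
    have hgj_k : pder k (g j) u = 2 * γ j k u * g j u := hgoff j k hkj u hu
    -- the undifferentiated Christoffel symbols
    have v1 : GamLC g k i i u = -(pder k (g i) u / (2 * g k u)) := by
      simp [GamLC, hki]
    have v2 : GamLC g i i j u = pder j (g i) u / (2 * g i u) := by
      simp [GamLC]
    have v3 : GamLC g k j j u = -(pder k (g j) u / (2 * g k u)) := by
      simp [GamLC, hkj]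
    have v4 : GamLC g j i i u = -(pder j (g i) u / (2 * g j u)) := by
      simp [GamLC, hji]
    have v5 : GamLC g k k j u = pder j (g k) u / (2 * g k u) := by
      simp [GamLC]
    rw [e2, e3, e4, e5, v1, v2, v3, v4, v5, hstar_ikj, hgi_j, hgk_j, hgi_k, hgj_k]
    field_simp [hgiu, hgju, hgku]
    have key : (g i u)⁻¹ * (g k u)⁻¹ ^ 4 * (g j u)⁻¹ * (g i u * g k u ^ 4 * g j u) = 1 := by
      rw [inv_pow]
      field_simp
    ring
  · intro i u hu
    rw [← Finset.add_sum_erase Finset.univ _ (Finset.mem_univ i),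
      hgdiag i u hu]
    have : ∀ k ∈ Finset.univ.erase i, pder k (g i) u = 2 * γ i k u * g i u := by
      intro k hk
      exact hgoff i k (Finset.ne_of_mem_erase hk) u hu
    rw [Finset.sum_congr rfl this]
    have : ∑ k ∈ Finset.univ.erase i, 2 * γ i k u * g i u
        = 2 * (∑ k ∈ Finset.univ.erase i, γ i k u) * g i u := by
      rw [← Finset.sum_mul, ← Finset.mul_sum]
    rw [this]
    ring

end
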